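/- Let f : ℝ → ℝ have bounded variation on the interval [0, 2π], with total variation V := eVariationOn f [0, 2π] < ∞, and suppose f is integrable on [0, 2π]. Then for every integer n ≥ 1, |∫_0^{2π} f(ω) dω − (2π/n) ∑_{j=1}^{n} f(2πj/n)| ≤ (2π/n) · V. -/

import Mathlib

open Real MeasureTheory

lemma sum_eVar (f : ℝ → ℝ) {x : ℕ → ℝ} (hx : Monotone x) (m : ℕ) :
    ∑ k ∈ Finset.range m, eVariationOn f (Set.Icc (x k) (x (k + 1))) =
      eVariationOn f (Set.Icc (x 0) (x m)) := by
  induction m with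
  | zero =>
    simp [eVariationOn.subsingleton f (Set.Icc_self (x 0) ▸ Set.subsingleton_singleton)]
  | succ m ih =>
    rw [Finset.sum_range_succ, ih]
    have := eVariationOn.Icc_add_Icc (s := Set.univ) f (hx (Nat.zero_le m)) (hx m.le_succ)
      (Set.mem_univ _)
    simpa using this

theorem stmt9 (f : ℝ → ℝ)
    (hV : eVariationOn f (Set.Icc 0 (2 * π)) ≠ ⊤)
    (hint : IntegrableOn f (Set.Icc 0 (2 * π))) :
    ∀ n : ℕ, 1 ≤ n →
      |(∫ ω in (0 : ℝ)..(2 * π), f ω) -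
          (2 * π / n) * ∑ j ∈ Finset.Icc 1 n, f (2 * π * j / n)| ≤
        (2 * π / n) * (eVariationOn f (Set.Icc 0 (2 * π))).toReal := by
  intro n hn
  have hn0 : (0 : ℝ) < n := by exact_mod_cast hn
  set x : ℕ → ℝ := fun k => 2 * π * k / n with hxdef
  have hmono : Monotone x := by
    intro a b hab
    have : (a : ℝ) ≤ b := by exact_mod_cast hab
    simp only [hxdef]
    gcongr
  have hx0 : x 0 = 0 := by simp [hxdef]
  have hxn : x n = 2 * π := by
    simp only [hxdef]
    exact mul_div_cancel_right₀ _ hn0.ne'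
  have hsub : ∀ k, k < n → Set.Icc (x k) (x (k + 1)) ⊆ Set.Icc 0 (2 * π) := by
    intro k hk
    rw [← hx0, ← hxn]
    exact Set.Icc_subset_Icc (hmono (Nat.zero_le k)) (hmono hk)
  have hii : ∀ k < n, IntervalIntegrable f volume (x k) (x (k + 1)) := by
    intro k hk
    rw [intervalIntegrable_iff]
    refine hint.mono_set ((Set.uIoc_subset_uIcc (α := ℝ)).trans ?_)
    rw [Set.uIcc_of_le (hmono k.le_succ)]
    exact hsub k hk
  have hsplit : (∫ ω in (0 : ℝ)..(2 * π), f ω) =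
      ∑ k ∈ Finset.range n, ∫ ω in (x k)..(x (k + 1)), f ω := by
    rw [intervalIntegral.sum_integral_adjacent_intervals hii, hx0, hxn]
  have hgap : ∀ k : ℕ, x (k + 1) - x k = 2 * π / n := by
    intro k
    simp only [hxdef]
    push_cast
    field_simp
    ring
  have hsum : (2 * π / n) * ∑ j ∈ Finset.Icc 1 n, f (2 * π * j / n) =
      ∑ k ∈ Finset.range n, (2 * π / n) * f (x (k + 1)) := by
    rw [Finset.mul_sum, ← Finset.Ico_add_one_right_eq_Icc, Finset.sum_Ico_eq_sum_range]
    simp only [hxdef, Nat.add_sub_cancel]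
    congr 1
    funext i; congr 2; push_cast; ring
  rw [hsplit, hsum, ← Finset.sum_sub_distrib]
  set V : ℕ → ENNReal := fun k => eVariationOn f (Set.Icc (x k) (x (k + 1))) with hVdef
  have hVfin : ∀ k, k < n → V k ≠ ⊤ := fun k hk =>
    ne_top_of_le_ne_top hV (eVariationOn.mono f (hsub k hk))
  have hterm : ∀ k ∈ Finset.range n,
      |(∫ ω in (x k)..(x (k + 1)), f ω) - (2 * π / n) * f (x (k + 1))| ≤
        (2 * π / n) * (V k).toReal := by
    intro k hk
    rw [Finset.mem_range] at hk
    have hle := hmono (k.le_succ)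
    have hconst : (2 * π / n) * f (x (k + 1)) = ∫ _ω in (x k)..(x (k + 1)), f (x (k + 1)) := by
      rw [intervalIntegral.integral_const, smul_eq_mul, hgap]
    rw [hconst, ← intervalIntegral.integral_sub (hii k hk) intervalIntegrable_const]
    have hbound : ∀ t ∈ Set.uIoc (x k) (x (k + 1)),
        ‖f t - f (x (k + 1))‖ ≤ (V k).toReal := by
      intro t ht
      rw [Set.uIoc_of_le hle] at ht
      have ht' : t ∈ Set.Icc (x k) (x (k + 1)) := ⟨le_of_lt ht.1, ht.2⟩
      have hx' : x (k + 1) ∈ Set.Icc (x k) (x (k + 1)) := ⟨hle, le_refl _⟩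
      have : dist (f t) (f (x (k + 1))) ≤ (V k).toReal :=
        BoundedVariationOn.dist_le (hVfin k hk) ht' hx'
      simpa [Real.dist_eq] using this
    calc |∫ ω in (x k)..(x (k + 1)), (f ω - f (x (k + 1)))|
        ≤ (V k).toReal * |x (k + 1) - x k| :=
          intervalIntegral.norm_integral_le_of_norm_le_const hbound
      _ = (2 * π / n) * (V k).toReal := by
          rw [hgap, abs_of_nonneg (by positivity), mul_comm]
  calc |∑ k ∈ Finset.range n, ((∫ ω in (x k)..(x (k + 1)), f ω) - (2 * π / n) * f (x (k + 1)))|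
      ≤ ∑ k ∈ Finset.range n, |(∫ ω in (x k)..(x (k + 1)), f ω) - (2 * π / n) * f (x (k + 1))| :=
        Finset.abs_sum_le_sum_abs _ _
    _ ≤ ∑ k ∈ Finset.range n, (2 * π / n) * (V k).toReal := Finset.sum_le_sum hterm
    _ = (2 * π / n) * ∑ k ∈ Finset.range n, (V k).toReal := by rw [Finset.mul_sum]
    _ ≤ (2 * π / n) * (eVariationOn f (Set.Icc 0 (2 * π))).toReal := by
        gcongr (2 * π / n) * ?_
        rw [← ENNReal.toReal_sum (fun k hk => hVfin k (Finset.mem_range.mp hk))]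
        apply ENNReal.toReal_mono hV
        rw [hVdef]
        rw [sum_eVar f hmono n, hx0, hxn]
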